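/- Let W : 2^Ω → ℝ₊ be a weighted coverage function: W(S) = Σ_{u ∈ U, u covered by some Bᵢ ∈ S} w(u), with weights w(u) ≥ 0, where Ω = {B₁,…,Bₙ} is a collection of subsets of a finite set U. Its multilinear extension f̄(x) = Σ_{u ∈ U} w(u)(1 - ∏_{i : u ∈ Bᵢ} (1 - xᵢ)) and the concave function f̃(x) = Σ_{u ∈ U} w(u) · min{1, Σ_{i : u ∈ Bᵢ} xᵢ} satisfy (1 - 1/e) f̃(x) ≤ f̄(x) ≤ f̃(x) for all x ∈ [0,1]ⁿ. -/

import Mathlib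

open Finset

/-- Weierstrass product inequality: `1 - ∑ x ≤ ∏ (1 - x)` for `x i ∈ [0,1]`. -/
lemma aux_one_sub_sum_le_prod {ι : Type*} (s : Finset ι) (x : ι → ℝ)
    (h0 : ∀ i, 0 ≤ x i) (h1 : ∀ i, x i ≤ 1) :
    1 - ∑ i ∈ s, x i ≤ ∏ i ∈ s, (1 - x i) := by
  classical
  induction s using Finset.induction_on with
  | empty => simp
  | @insert a t hnot ih =>
    rw [Finset.sum_insert hnot, Finset.prod_insert hnot]
    have hs : 0 ≤ ∑ i ∈ t, x i := Finset.sum_nonneg fun i _ => h0 i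
    nlinarith [ih, h0 a, h1 a, hs]

/-- Per-element squeeze. -/
lemma aux_squeeze {ι : Type*} (s : Finset ι) (x : ι → ℝ)
    (h0 : ∀ i, 0 ≤ x i) (h1 : ∀ i, x i ≤ 1) :
    (1 - Real.exp (-1)) * min 1 (∑ i ∈ s, x i) ≤ 1 - ∏ i ∈ s, (1 - x i) ∧
      1 - ∏ i ∈ s, (1 - x i) ≤ min 1 (∑ i ∈ s, x i) := by
  classical
  set S := ∑ i ∈ s, x i with hS
  set P := ∏ i ∈ s, (1 - x i) with hP
  have hP0 : 0 ≤ P := Finset.prod_nonneg fun i hi => by linarith [h1 i]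
  have hS0 : 0 ≤ S := Finset.sum_nonneg fun i _ => h0 i
  have hPle : P ≤ Real.exp (-S) := by
    rw [hP, hS, ← Finset.sum_neg_distrib, Real.exp_sum]
    exact Finset.prod_le_prod (fun i hi => by linarith [h1 i])
      (fun i hi => by linarith [Real.add_one_le_exp (-x i)])
  constructor
  · -- lower bound
    rcases le_total 1 S with h | h
    · rw [min_eq_left h]
      have : Real.exp (-S) ≤ Real.exp (-1) := Real.exp_le_exp.2 (by linarith)
      nlinarith [Real.exp_pos (-1 : ℝ)]
    · rw [min_eq_right h]
      -- convexity of exp: exp(-S) ≤ (1-S) + S * exp(-1)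
      have hc : Real.exp (-S) ≤ (1 - S) * Real.exp 0 + S * Real.exp (-1) := by
        have := (convexOn_exp.2) (Set.mem_univ (0 : ℝ)) (Set.mem_univ (-1 : ℝ))
          (by linarith : (0:ℝ) ≤ 1 - S) hS0 (by ring : (1 - S) + S = 1)
        simpa [smul_eq_mul, mul_comm] using this
      rw [Real.exp_zero] at hc
      nlinarith
  · -- upper bound
    apply le_min
    · linarith
    · have := aux_one_sub_sum_le_prod s x h0 h1
      linarith

/-- The squeeze relation `(1 - 1/e) f̃(x) ≤ f̄(x) ≤ f̃(x)` between the multilinear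
extension of a weighted coverage function and its concave upper bound. -/
theorem coverage_multilinear_squeeze
    {U : Type*} [Fintype U] [DecidableEq U] {n : ℕ}
    (w : U → ℝ) (hw : ∀ u, 0 ≤ w u) (B : Fin n → Finset U)
    (fbar ftilde : (Fin n → ℝ) → ℝ)
    (hfbar : fbar = fun x => ∑ u : U, w u *
      (1 - ∏ i ∈ Finset.univ.filter (fun i => u ∈ B i), (1 - x i)))
    (hftilde : ftilde = fun x => ∑ u : U, w u *
      min 1 (∑ i ∈ Finset.univ.filter (fun i => u ∈ B i), x i)) :
    ∀ x ∈ Set.Icc (0 : Fin n → ℝ) 1,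
      (1 - Real.exp (-1)) * ftilde x ≤ fbar x ∧ fbar x ≤ ftilde x := by
  intro x hx
  obtain ⟨hx0, hx1⟩ := hx
  subst hfbar hftilde
  have key : ∀ u : U,
      (1 - Real.exp (-1)) * min 1 (∑ i ∈ Finset.univ.filter (fun i => u ∈ B i), x i)
        ≤ 1 - ∏ i ∈ Finset.univ.filter (fun i => u ∈ B i), (1 - x i) ∧
      1 - ∏ i ∈ Finset.univ.filter (fun i => u ∈ B i), (1 - x i)
        ≤ min 1 (∑ i ∈ Finset.univ.filter (fun i => u ∈ B i), x i) :=
    fun u => aux_squeeze _ x (fun i => hx0 i) (fun i => hx1 i)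
  constructor
  · rw [Finset.mul_sum]
    refine Finset.sum_le_sum fun u _ => ?_
    rw [show (1 - Real.exp (-1)) * (w u * min 1 (∑ i ∈ Finset.univ.filter (fun i => u ∈ B i), x i))
        = w u * ((1 - Real.exp (-1)) * min 1 (∑ i ∈ Finset.univ.filter (fun i => u ∈ B i), x i))
      by ring]
    exact mul_le_mul_of_nonneg_left (key u).1 (hw u)
  · exact Finset.sum_le_sum fun u _ => mul_le_mul_of_nonneg_left (key u).2 (hw u)
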